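/- Let q be a prime power and let H be a subgroup of PGL₂(F_q), acting naturally on the projective line P¹(F_q) by Möbius transformations. Then the total number of orbits of H on P¹(F_q) equals ⌈(q+1)/|H|⌉ if the number of short orbits (orbits of cardinality < |H|) is 0 or 1, and equals ⌈(q+1)/|H|⌉ + 1 if the number of short orbits is 2 or 3. -/

import Mathlib

def mobiusMap {F : Type*} [Field F] [DecidableEq F] (a b c d : F) :
    Option F → Option F
  | none => if c = 0 then none else some (a / c)
  | some x => if c * x + d = 0 then none else some ((a * x + b) / (c * x + d))

def IsMobius {F : Type*} [Field F] [DecidableEq F] (σ : Equiv.Perm (Option F)) : Prop :=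
  ∃ a b c d : F, a * d - b * c ≠ 0 ∧ ∀ x, σ x = mobiusMap a b c d x

open Polynomial in
lemma aux_roots {F : Type*} [Field F] (p : Polynomial F) (hp : p ≠ 0) :
    {y : F | Polynomial.eval y p = 0}.ncard ≤ p.natDegree := by
  classical
  have h : {y : F | Polynomial.eval y p = 0} = ↑p.roots.toFinset := by
    ext y; simp [Polynomial.mem_roots, hp, Polynomial.IsRoot]
  rw [h, Set.ncard_coe_finset]
  exact (Multiset.toFinset_card_le _).trans (Polynomial.card_roots' p)

open Polynomial in
lemma mobius_fix_le {F : Type*} [Field F] [Fintype F] [DecidableEq F]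
    (σ : Equiv.Perm (Option F)) (hm : IsMobius σ) (hne : σ ≠ 1) :
    {x : Option F | σ x = x}.ncard ≤ 2 := by
  classical
  obtain ⟨a, b, c, d, hdet, hσ⟩ := hm
  by_cases hc : c = 0
  · subst hc
    have ha : a ≠ 0 := by intro h; apply hdet; simp [h]
    have hd : d ≠ 0 := by intro h; apply hdet; simp [h]
    set p : Polynomial F := C (d - a) * X + C (-b) with hpdef
    have hne' : ¬ (d - a = 0 ∧ b = 0) := by
      rintro ⟨h1, h2⟩
      have hda : d = a := sub_eq_zero.mp h1
      apply hne
      apply Equiv.ext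
      intro x
      rw [Equiv.Perm.one_apply]
      cases x with
      | none => simp [hσ none, mobiusMap]
      | some y =>
        have hdy : (0:F) * y + d ≠ 0 := by simpa using hd
        rw [hσ (some y)]
        simp only [mobiusMap, hdy, if_neg, if_false]
        congr 1
        subst h2 hda
        simp [hd]
    have hpne : p ≠ 0 := by
      intro h
      apply hne'
      constructor
      · have := congrArg (fun q => Polynomial.coeff q 1) h
        simpa [hpdef] using this
      · have := congrArg (fun q => Polynomial.coeff q 0) h
        have h0 : -b = 0 := by simpa [hpdef] using this
        simpa using h0
    have hdeg : p.natDegree ≤ 1 := natDegree_linear_le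
    have hsub : {x : Option F | σ x = x} ⊆
        insert none (some '' {y : F | Polynomial.eval y p = 0}) := by
      intro x hx
      cases x with
      | none => exact Set.mem_insert _ _
      | some y =>
        have hx' : σ (some y) = some y := hx
        rw [hσ (some y)] at hx'
        have hdy : (0:F) * y + d ≠ 0 := by simpa using hd
        simp only [mobiusMap, hdy, if_neg] at hx'
        have h2 : (a * y + b) / ((0:F) * y + d) = y := by
          simpa using Option.some_injective _ hx'
        rw [zero_mul, zero_add] at h2
        rw [div_eq_iff hd] at h2
        refine Set.mem_insert_of_mem _ ⟨y, ?_, rfl⟩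
        simp only [Set.mem_setOf_eq, hpdef]
        simp only [Polynomial.eval_add, Polynomial.eval_mul, Polynomial.eval_C, Polynomial.eval_X]
        linear_combination -h2
    calc {x : Option F | σ x = x}.ncard
        ≤ (insert none (some '' {y : F | Polynomial.eval y p = 0})).ncard :=
          Set.ncard_le_ncard hsub (Set.toFinite _)
      _ ≤ (some '' {y : F | Polynomial.eval y p = 0}).ncard + 1 := Set.ncard_insert_le _ _
      _ = {y : F | Polynomial.eval y p = 0}.ncard + 1 := by
          rw [Set.ncard_image_of_injective _ (Option.some_injective F)]
      _ ≤ 1 + 1 := by have := (aux_roots p hpne).trans hdeg; omega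
      _ ≤ 2 := by norm_num
  · set p : Polynomial F := C c * X ^ 2 + C (d - a) * X + C (-b) with hpdef
    have hpne : p ≠ 0 := by
      intro h
      apply hc
      have := congrArg (fun q => Polynomial.coeff q 2) h
      simpa [hpdef, Polynomial.coeff_C] using this
    have hdeg : p.natDegree ≤ 2 := natDegree_quadratic_le
    have hsub : {x : Option F | σ x = x} ⊆ some '' {y : F | Polynomial.eval y p = 0} := by
      intro x hx
      cases x with
      | none =>
        exfalso
        have hx' : σ none = none := hx
        rw [hσ none] at hx'
        simp [mobiusMap, hc] at hx'
      | some y =>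
        have hx' : σ (some y) = some y := hx
        rw [hσ (some y)] at hx'
        by_cases hcy : c * y + d = 0
        · simp [mobiusMap, hcy] at hx'
        · simp only [mobiusMap, hcy, if_neg] at hx'
          have h2 : (a * y + b) / (c * y + d) = y := by
            simpa using Option.some_injective _ hx'
          rw [div_eq_iff hcy] at h2
          refine ⟨y, ?_, rfl⟩
          simp only [Set.mem_setOf_eq, hpdef]
          simp only [Polynomial.eval_add, Polynomial.eval_mul, Polynomial.eval_C,
            Polynomial.eval_X, Polynomial.eval_pow]
          linear_combination -h2
    calc {x : Option F | σ x = x}.ncard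
        ≤ (some '' {y : F | Polynomial.eval y p = 0}).ncard :=
          Set.ncard_le_ncard hsub (Set.toFinite _)
      _ = {y : F | Polynomial.eval y p = 0}.ncard := by
          rw [Set.ncard_image_of_injective _ (Option.some_injective F)]
      _ ≤ 2 := (aux_roots p hpne).trans hdeg

/-- For a subgroup `H` of `PGL₂(F_q)` acting naturally on `P¹(F_q)`, the total number
of orbits is `⌈(q+1)/|H|⌉` if there are `0` or `1` short orbits, and `⌈(q+1)/|H|⌉ + 1`
if there are `2` or `3` short orbits.  (Here `⌈(q+1)/|H|⌉` is written as the ceiling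
division `(q + 1 + |H| - 1) / |H|` of natural numbers.) -/
theorem stmt8 {F : Type*} [Field F] [Fintype F] [DecidableEq F]
    (H : Subgroup (Equiv.Perm (Option F))) (hH : ∀ σ ∈ H, IsMobius σ) :
    (({O : Set (Option F) | (∃ x, O = MulAction.orbit H x) ∧ O.ncard < Nat.card H}.ncard = 0 ∨
      {O : Set (Option F) | (∃ x, O = MulAction.orbit H x) ∧ O.ncard < Nat.card H}.ncard = 1) →
      {O : Set (Option F) | ∃ x, O = MulAction.orbit H x}.ncard
        = (Fintype.card F + 1 + Nat.card H - 1) / Nat.card H) ∧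
    (({O : Set (Option F) | (∃ x, O = MulAction.orbit H x) ∧ O.ncard < Nat.card H}.ncard = 2 ∨
      {O : Set (Option F) | (∃ x, O = MulAction.orbit H x) ∧ O.ncard < Nat.card H}.ncard = 3) →
      {O : Set (Option F) | ∃ x, O = MulAction.orbit H x}.ncard
        = (Fintype.card F + 1 + Nat.card H - 1) / Nat.card H + 1) := by
  classical
  open MulAction in
  letI : Fintype (orbitRel.Quotient H (Option F)) := Fintype.ofFinite _
  letI : Fintype (Quotient (orbitRel H (Option F))) := Fintype.ofFinite _
  letI : Fintype ↥H := Fintype.ofFinite _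
  set n := Nat.card ↥H with hn
  have hn1 : 0 < n := Nat.card_pos
  have hnH : n = Fintype.card ↥H := Nat.card_eq_fintype_card
  set Q := orbitRel.Quotient H (Option F) with hQdef
  set r : Q → ℕ := fun ω => ω.orbit.ncard with hrdef
  set N := Fintype.card Q with hNdef
  have horb : ∀ ω : Q, ω.orbit = orbit H (Quotient.out ω) := fun ω =>
    orbitRel.Quotient.orbit_eq_orbit_out ω Quotient.out_eq'
  -- number of orbits
  have hTcard : {O : Set (Option F) | ∃ x, O = MulAction.orbit H x}.ncard = N := by
    have hT : {O : Set (Option F) | ∃ x, O = MulAction.orbit H x}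
        = Set.range (orbitRel.Quotient.orbit : Q → Set (Option F)) := by
      ext O
      constructor
      · rintro ⟨x, rfl⟩
        exact ⟨Quotient.mk'' x, orbitRel.Quotient.orbit_mk x⟩
      · rintro ⟨ω, rfl⟩
        exact ⟨Quotient.out ω, horb ω⟩
    rw [hT, ← Nat.card_coe_set_eq,
      Nat.card_range_of_injective orbitRel.Quotient.orbit_injective,
      Nat.card_eq_fintype_card]
  -- number of short orbits
  set S : Finset Q := Finset.univ.filter (fun ω => r ω < n) with hSdef
  have hTscard :
      {O : Set (Option F) | (∃ x, O = MulAction.orbit H x) ∧ O.ncard < Nat.card H}.ncard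
        = S.card := by
    have hTs : {O : Set (Option F) | (∃ x, O = MulAction.orbit H x) ∧ O.ncard < Nat.card H}
        = (orbitRel.Quotient.orbit : Q → Set (Option F)) '' {ω : Q | r ω < n} := by
      ext O
      simp only [Set.mem_setOf_eq, Set.mem_image]
      constructor
      · rintro ⟨⟨x, rfl⟩, hlt⟩
        refine ⟨Quotient.mk'' x, ?_, orbitRel.Quotient.orbit_mk x⟩
        show (orbitRel.Quotient.orbit (Quotient.mk'' x)).ncard < n
        rw [orbitRel.Quotient.orbit_mk]
        exact hlt
      · rintro ⟨ω, hω, rfl⟩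
        exact ⟨⟨Quotient.out ω, horb ω⟩, hω⟩
    rw [hTs, Set.ncard_image_of_injective _ orbitRel.Quotient.orbit_injective,
      ← Set.ncard_coe_finset]
    congr 1
    ext ω
    simp [hSdef]
  -- orbit size facts
  have hrcard : ∀ ω : Q, r ω = Fintype.card ω.orbit := by
    intro ω
    show (orbitRel.Quotient.orbit ω).ncard = Fintype.card ω.orbit
    rw [← Nat.card_coe_set_eq, Nat.card_eq_fintype_card]
  have hdvd : ∀ ω : Q, r ω ∣ n := by
    intro ω
    rw [hrcard ω, hnH]
    have := card_orbit_mul_card_stabilizer_eq_card_group H (Quotient.out ω)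
    refine ⟨Fintype.card (stabilizer H (Quotient.out ω)), ?_⟩
    rw [← this]
    congr 1
    · exact Fintype.card_congr (Equiv.setCongr (by rw [horb ω]))
  have hrpos : ∀ ω : Q, 1 ≤ r ω := by
    intro ω
    rw [hrdef]
    refine (Set.ncard_pos (Set.toFinite _)).mpr ?_
    rw [horb ω]
    exact MulAction.nonempty_orbit _
  have hrle : ∀ ω : Q, r ω ≤ n := fun ω => Nat.le_of_dvd hn1 (hdvd ω)
  have hshort : ∀ ω ∈ S, 2 * r ω ≤ n := by
    intro ω hω
    have hlt : r ω < n := by simpa [hSdef] using hω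
    obtain ⟨k, hk⟩ := hdvd ω
    have hk2 : 2 ≤ k := by
      by_contra hk2
      interval_cases k <;> omega
    calc 2 * r ω ≤ k * r ω := Nat.mul_le_mul_right _ hk2
      _ = n := by rw [hk]; ring
  have hlong : ∀ ω ∈ Finset.univ.filter (fun ω => ¬ r ω < n), r ω = n := by
    intro ω hω
    have := hrle ω
    have h2 : ¬ r ω < n := by simpa [hSdef] using (Finset.mem_filter.mp hω).2
    omega
  -- sum of orbit sizes
  have hsum : ∑ ω : Q, r ω = Fintype.card F + 1 := by
    have h1 : Fintype.card (Option F) = ∑ ω : Q, Fintype.card ω.orbit := by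
      rw [Fintype.card_congr (selfEquivSigmaOrbits' H (Option F)), Fintype.card_sigma]
    rw [Finset.sum_congr rfl (fun ω _ => hrcard ω), ← h1, Fintype.card_option]
  set T0 := ∑ ω ∈ S, r ω with hT0def
  set c2 := (Finset.univ.filter (fun ω => ¬ r ω < n)).card with hc2def
  have hsplit : T0 + c2 * n = Fintype.card F + 1 := by
    rw [← hsum, ← Finset.sum_filter_add_sum_filter_not Finset.univ (fun ω => r ω < n) r]
    congr 1
    rw [Finset.sum_congr rfl hlong, Finset.sum_const, smul_eq_mul]
  have hcards : S.card + c2 = N := by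
    rw [hSdef, hc2def, hNdef]
    exact Finset.card_filter_add_card_filter_not _
  -- bounds on T0
  have hT0low : S.card ≤ T0 := by
    have := Finset.card_nsmul_le_sum S r 1 (fun ω _ => hrpos ω)
    simpa using this
  have hT0up : 2 * T0 ≤ S.card * n := by
    have := Finset.sum_le_card_nsmul S (fun ω => 2 * r ω) n hshort
    rw [smul_eq_mul, ← Finset.mul_sum] at this
    exact this
  -- Burnside
  have hburnside : N * n ≤ (Fintype.card F + 1) + 2 * (n - 1) := by
    have hb : (∑ g : ↥H, Fintype.card (fixedBy (Option F) g))
        = Fintype.card (Quotient (orbitRel H (Option F))) * Fintype.card ↥H :=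
      sum_card_fixedBy_eq_card_orbits_mul_card_group H (Option F)
    have hfix1 : Fintype.card (fixedBy (Option F) (1 : ↥H)) = Fintype.card F + 1 := by
      have : fixedBy (Option F) (1 : ↥H) = Set.univ := by
        ext x; simp [MulAction.fixedBy]
      rw [← Nat.card_eq_fintype_card, Nat.card_coe_set_eq, this, Set.ncard_univ,
        Nat.card_eq_fintype_card, Fintype.card_option]
    have hfixg : ∀ g : ↥H, g ≠ 1 → Fintype.card (fixedBy (Option F) g) ≤ 2 := by
      intro g hg
      have hgm : IsMobius (g : Equiv.Perm (Option F)) := hH _ g.2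
      have hgne : (g : Equiv.Perm (Option F)) ≠ 1 := by
        intro h
        exact hg (by ext; simp [h])
      have hset : fixedBy (Option F) g = {x : Option F | (g : Equiv.Perm (Option F)) x = x} := by
        ext x
        simp only [MulAction.fixedBy, Set.mem_setOf_eq]
        rfl
      rw [← Nat.card_eq_fintype_card, Nat.card_coe_set_eq, hset]
      exact mobius_fix_le _ hgm hgne
    have hsplit' : (∑ g : ↥H, Fintype.card (fixedBy (Option F) g))
        = Fintype.card (fixedBy (Option F) (1 : ↥H))
          + ∑ g ∈ Finset.univ.erase (1 : ↥H), Fintype.card (fixedBy (Option F) g) :=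
      (Finset.add_sum_erase _ _ (Finset.mem_univ _)).symm
    have hrest : ∑ g ∈ Finset.univ.erase (1 : ↥H), Fintype.card (fixedBy (Option F) g)
        ≤ 2 * (n - 1) := by
      have := Finset.sum_le_card_nsmul (Finset.univ.erase (1 : ↥H))
        (fun g => Fintype.card (fixedBy (Option F) g)) 2
        (fun g hg => hfixg g (Finset.ne_of_mem_erase hg))
      rw [smul_eq_mul] at this
      have hcard : (Finset.univ.erase (1 : ↥H)).card = n - 1 := by
        rw [Finset.card_erase_of_mem (Finset.mem_univ _), Finset.card_univ, hnH]
      rw [hcard] at this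
      omega
    calc N * n = ∑ g : ↥H, Fintype.card (fixedBy (Option F) g) := by
          rw [hb, hNdef, hnH]
      _ ≤ (Fintype.card F + 1) + 2 * (n - 1) := by
          rw [hsplit', hfix1]
          omega
  -- final arithmetic
  have hmain : (Fintype.card F + 1 + n - 1) / n = (T0 + (n - 1)) / n + c2 := by
    have h1 : Fintype.card F + 1 + n - 1 = (T0 + (n - 1)) + c2 * n := by omega
    rw [h1, Nat.add_mul_div_right _ _ hn1]
  rw [← hn] at *
  constructor
  · intro hcase
    rw [hTscard] at hcase
    rw [hTcard, hmain]
    rcases hcase with hcase | hcase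
    · have hT00 : T0 = 0 := by
        rw [hT0def, Finset.card_eq_zero.mp hcase, Finset.sum_empty]
      have : (T0 + (n - 1)) / n = 0 := Nat.div_eq_of_lt (by omega)
      omega
    · obtain ⟨ω, hω⟩ := Finset.card_eq_one.mp hcase
      have hrω : T0 = r ω := by rw [hT0def, hω, Finset.sum_singleton]
      have h1 : 1 ≤ T0 := by omega
      have h2 : T0 < n := by
        rw [hrω]
        have : ω ∈ S := by rw [hω]; exact Finset.mem_singleton_self ω
        simpa [hSdef] using this
      have : (T0 + (n - 1)) / n = 1 := Nat.div_eq_of_lt_le (by omega) (by omega)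
      omega
  · intro hcase
    rw [hTscard] at hcase
    rw [hTcard, hmain]
    rcases hcase with hcase | hcase
    · -- two short orbits
      have h1 : 2 ≤ T0 := by omega
      have h2 : T0 ≤ n := by
        rw [hcase] at hT0up
        omega
      have : (T0 + (n - 1)) / n = 1 := Nat.div_eq_of_lt_le (by omega) (by omega)
      omega
    · -- three short orbits
      have h2 : T0 ≤ 2 * n := by
        rw [hcase] at hT0up
        omega
      have h1 : n + 2 ≤ T0 := by
        have hNe : N = 3 + c2 := by omega
        rw [hNe, add_mul] at hburnside
        have hq : Fintype.card F + 1 = T0 + c2 * n := hsplit.symm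
        rw [hq] at hburnside
        have h3 : 3 * n + c2 * n ≤ (T0 + 2 * (n - 1)) + c2 * n := by omega
        have h4 : 3 * n ≤ T0 + 2 * (n - 1) := Nat.le_of_add_le_add_right h3
        omega
      have : (T0 + (n - 1)) / n = 2 := Nat.div_eq_of_lt_le (by omega) (by omega)
      omega
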